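/- Let u : Ω → ℝ be convex on Ω ⊆ ℝⁿ open, y₀, y₁ ∈ Ω distinct, τ ∈ (0,1), and ε > 0. Assume: (i) the balls B_{3ε}(y₀), B_{3ε}(y₁), B_{3ε}(τy₀+(1-τ)y₁) are pairwise disjoint (so τ ≥ 6ε/|y₀-y₁| and 1-τ ≥ 6ε/|y₀-y₁|); (ii) |u| ≤ 1 on B_ε(y₀) ∪ B_ε(y₁); (iii) |u| ≤ C₀ on B_ε(τy₀+(1-τ)y₁) ∩ Ω. Then for every p ∈ B_ε(τy₀+(1-τ)y₁) ∩ Ω at which u is differentiable, the directional derivative of u in direction e := (y₁-y₀)/|y₁-y₀| satisfies |⟨∇u(p), e⟩| ≤ (1+C₀)/(6ε). -/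

import Mathlib

open Metric Set Filter

private lemma slope_bound' {g : ℝ → ℝ} {d c : ℝ} (hg : HasDerivAt g d 0)
    (h : ∀ᶠ t in nhdsWithin (0:ℝ) (Ioi 0), g t ≤ g 0 + t * c) : d ≤ c := by
  have ht : Tendsto (slope g 0) (nhdsWithin 0 (Ioi 0)) (nhds d) :=
    (hasDerivAt_iff_tendsto_slope.mp hg).mono_left
      (nhdsWithin_mono 0 (fun t ht => ne_of_gt ht))
  refine le_of_tendsto ht ?_
  filter_upwards [h, self_mem_nhdsWithin] with t hgt ht'
  have ht0 : (0:ℝ) < t := ht'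
  rw [slope_def_field, div_eq_inv_mul]
  rw [sub_zero]
  rw [inv_mul_eq_div, div_le_iff₀ ht0]
  linarith

private lemma subgrad' {n : ℕ} {Ω : Set (EuclideanSpace ℝ (Fin n))} (hΩopen : IsOpen Ω)
    {u : EuclideanSpace ℝ (Fin n) → ℝ}
    (hconv : ∀ x ∈ Ω, ∀ y ∈ Ω, ∀ τ : ℝ, τ ∈ Ioo (0:ℝ) 1 →
      τ • x + (1 - τ) • y ∈ Ω →
      u (τ • x + (1 - τ) • y) ≤ τ * u x + (1 - τ) * u y)
    {p z : EuclideanSpace ℝ (Fin n)} (hpΩ : p ∈ Ω) (hzΩ : z ∈ Ω)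
    (hdiff : DifferentiableAt ℝ u p) :
    fderiv ℝ u p (z - p) ≤ u z - u p := by
  set g : ℝ → EuclideanSpace ℝ (Fin n) := fun t => p + t • (z - p) with hgdef
  have hg0 : g 0 = p := by simp [hgdef]
  have hline : HasDerivAt g (z - p) 0 := by
    have h1 : HasDerivAt (fun t : ℝ => t • (z - p)) ((1:ℝ) • (z - p)) 0 :=
      (hasDerivAt_id 0).smul_const (z - p)
    simpa [hgdef] using h1.const_add p
  have hgℝ : HasDerivAt (fun t => u (g t)) (fderiv ℝ u p (z - p)) 0 := by
    have hF : HasFDerivAt u (fderiv ℝ u p) (g 0) := hg0.symm ▸ hdiff.hasFDerivAt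
    exact hF.comp_hasDerivAt 0 hline
  have hcont : Tendsto g (nhds 0) (nhds p) := by
    have := hline.continuousAt.tendsto
    rwa [hg0] at this
  have hΩev : ∀ᶠ t in nhds (0:ℝ), g t ∈ Ω := hcont.eventually (hΩopen.mem_nhds hpΩ)
  have hev : ∀ᶠ t in nhdsWithin (0:ℝ) (Ioi 0), u (g t) ≤ u (g 0) + t * (u z - u p) := by
    filter_upwards [eventually_nhdsWithin_of_eventually_nhds hΩev,
      eventually_nhdsWithin_of_eventually_nhds
        (gt_mem_nhds (by norm_num : (0:ℝ) < 1)),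
      self_mem_nhdsWithin] with t htΩ ht1 ht0
    have htI : t ∈ Ioo (0:ℝ) 1 := ⟨ht0, ht1⟩
    have heq : t • z + (1 - t) • p = g t := by
      simp only [hgdef]
      module
    have hc := hconv z hzΩ p hpΩ t htI (by rw [heq]; exact htΩ)
    rw [heq] at hc
    rw [hg0]
    calc u (g t) ≤ t * u z + (1 - t) * u p := hc
    _ = u p + t * (u z - u p) := by ring
  exact slope_bound' hgℝ hev

private lemma dist_of_disjoint_balls' {n : ℕ} {ε : ℝ} (hε : 0 < ε)
    {a b : EuclideanSpace ℝ (Fin n)}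
    (hd : Disjoint (ball a (3 * ε)) (ball b (3 * ε))) : 6 * ε ≤ dist a b := by
  by_contra h
  push_neg at h
  have hma : midpoint ℝ a b ∈ ball a (3 * ε) := by
    rw [mem_ball, dist_comm, dist_left_midpoint]
    rw [Real.norm_ofNat]
    linarith
  have hmb : midpoint ℝ a b ∈ ball b (3 * ε) := by
    rw [mem_ball, dist_comm, dist_right_midpoint]
    rw [Real.norm_ofNat]
    linarith
  exact Set.disjoint_left.mp hd hma hmb

/-- Bound on the directional derivative of a convex function in the direction
`(y₁ - y₀)/‖y₁ - y₀‖` near the convex combination `τ • y₀ + (1 - τ) • y₁`. -/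
theorem stmt_5 {n : ℕ} (Ω : Set (EuclideanSpace ℝ (Fin n))) (hΩopen : IsOpen Ω)
    (u : EuclideanSpace ℝ (Fin n) → ℝ)
    (hconv : ∀ x ∈ Ω, ∀ y ∈ Ω, ∀ τ : ℝ, τ ∈ Ioo (0:ℝ) 1 →
      τ • x + (1 - τ) • y ∈ Ω →
      u (τ • x + (1 - τ) • y) ≤ τ * u x + (1 - τ) * u y)
    (y₀ y₁ : EuclideanSpace ℝ (Fin n)) (hne : y₀ ≠ y₁) (hy₀ : y₀ ∈ Ω) (hy₁ : y₁ ∈ Ω)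
    (τ : ℝ) (hτ : τ ∈ Ioo (0:ℝ) 1) (ε : ℝ) (hε : 0 < ε) (C₀ : ℝ)
    (hdisj₀₁ : Disjoint (ball y₀ (3 * ε)) (ball y₁ (3 * ε)))
    (hdisj₀q : Disjoint (ball y₀ (3 * ε)) (ball (τ • y₀ + (1 - τ) • y₁) (3 * ε)))
    (hdisj₁q : Disjoint (ball y₁ (3 * ε)) (ball (τ • y₀ + (1 - τ) • y₁) (3 * ε)))
    (hball₀ : ball y₀ ε ⊆ Ω) (hball₁ : ball y₁ ε ⊆ Ω)
    (hbd : ∀ x ∈ ball y₀ ε ∪ ball y₁ ε, |u x| ≤ 1)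
    (hbdq : ∀ x ∈ ball (τ • y₀ + (1 - τ) • y₁) ε ∩ Ω, |u x| ≤ C₀)
    (p : EuclideanSpace ℝ (Fin n)) (hp : p ∈ ball (τ • y₀ + (1 - τ) • y₁) ε ∩ Ω)
    (hdiff : DifferentiableAt ℝ u p) :
    |fderiv ℝ u p (‖y₁ - y₀‖⁻¹ • (y₁ - y₀))| ≤ (1 + C₀) / (6 * ε) := by
  obtain ⟨hτ0, hτ1⟩ := hτ
  set q : EuclideanSpace ℝ (Fin n) := τ • y₀ + (1 - τ) • y₁ with hqdef
  set v : EuclideanSpace ℝ (Fin n) := y₁ - y₀ with hvdef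
  obtain ⟨hpq, hpΩ⟩ := hp
  rw [mem_ball] at hpq
  have hv : 0 < ‖v‖ := by
    rw [norm_pos_iff, hvdef, sub_ne_zero]
    exact hne.symm
  -- distance facts
  have hd1 : dist y₁ q = τ * ‖v‖ := by
    rw [dist_eq_norm]
    have : y₁ - q = τ • v := by rw [hqdef, hvdef]; module
    rw [this, norm_smul, Real.norm_eq_abs, abs_of_pos hτ0]
  have hd0 : dist y₀ q = (1 - τ) * ‖v‖ := by
    rw [dist_eq_norm]
    have : y₀ - q = (1 - τ) • (-v) := by rw [hqdef, hvdef]; module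
    rw [this, norm_smul, norm_neg, Real.norm_eq_abs, abs_of_pos (by linarith)]
  have hτv : 6 * ε ≤ τ * ‖v‖ := hd1 ▸ dist_of_disjoint_balls' hε hdisj₁q
  have h1τv : 6 * ε ≤ (1 - τ) * ‖v‖ := hd0 ▸ dist_of_disjoint_balls' hε hdisj₀q
  -- auxiliary points
  set z₁ : EuclideanSpace ℝ (Fin n) := p + τ • v with hz₁def
  set z₀ : EuclideanSpace ℝ (Fin n) := p + (1 - τ) • (-v) with hz₀def
  have hz₁b : z₁ ∈ ball y₁ ε := by
    rw [mem_ball, dist_eq_norm]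
    have : z₁ - y₁ = p - q := by rw [hz₁def, hqdef, hvdef]; module
    rw [this, ← dist_eq_norm]
    exact hpq
  have hz₀b : z₀ ∈ ball y₀ ε := by
    rw [mem_ball, dist_eq_norm]
    have : z₀ - y₀ = p - q := by rw [hz₀def, hqdef, hvdef]; module
    rw [this, ← dist_eq_norm]
    exact hpq
  -- value bounds
  have hup : |u p| ≤ C₀ := hbdq p ⟨mem_ball.mpr hpq, hpΩ⟩
  have huz₁ : |u z₁| ≤ 1 := hbd z₁ (Or.inr hz₁b)
  have huz₀ : |u z₀| ≤ 1 := hbd z₀ (Or.inl hz₀b)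
  have hC₀ : 0 ≤ C₀ := le_trans (abs_nonneg _) hup
  have hM : (0:ℝ) ≤ 1 + C₀ := by linarith
  -- subgradient inequalities
  set D : ℝ := fderiv ℝ u p v with hDdef
  have h₁ : τ * D ≤ 1 + C₀ := by
    have hs := subgrad' hΩopen hconv hpΩ (hball₁ hz₁b) hdiff
    have he : z₁ - p = τ • v := by rw [hz₁def]; module
    rw [he, map_smul, smul_eq_mul] at hs
    have h1 := abs_le.mp huz₁
    have h2 := abs_le.mp hup
    calc τ * D ≤ u z₁ - u p := hs
    _ ≤ 1 + C₀ := by linarith [h1.2, h2.1]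
  have h₂ : -((1 - τ) * D) ≤ 1 + C₀ := by
    have hs := subgrad' hΩopen hconv hpΩ (hball₀ hz₀b) hdiff
    have he : z₀ - p = (1 - τ) • (-v) := by rw [hz₀def]; module
    rw [he, map_smul, smul_eq_mul, map_neg] at hs
    have h1 := abs_le.mp huz₀
    have h2 := abs_le.mp hup
    calc -((1 - τ) * D) = (1 - τ) * (-D) := by ring
    _ ≤ u z₀ - u p := hs
    _ ≤ 1 + C₀ := by linarith [h1.2, h2.1]
  -- conclusion
  have hgoal : fderiv ℝ u p (‖v‖⁻¹ • v) = ‖v‖⁻¹ * D := by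
    rw [map_smul, smul_eq_mul]
  rw [hgoal, abs_le]
  have h6ε : (0:ℝ) < 6 * ε := by linarith
  constructor
  · rw [neg_le, show -(‖v‖⁻¹ * D) = ‖v‖⁻¹ * -D by ring, inv_mul_eq_div,
      div_le_div_iff₀ hv h6ε]
    rcases le_or_gt 0 (-D) with hD | hD
    · have h₂' : (1 - τ) * -D ≤ 1 + C₀ := by linarith [h₂]
      calc -D * (6 * ε) ≤ -D * ((1 - τ) * ‖v‖) := mul_le_mul_of_nonneg_left h1τv hD
      _ = (1 - τ) * -D * ‖v‖ := by ring
      _ ≤ (1 + C₀) * ‖v‖ := mul_le_mul_of_nonneg_right h₂' hv.le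
    · calc -D * (6 * ε) ≤ 0 := mul_nonpos_of_nonpos_of_nonneg (by linarith) h6ε.le
      _ ≤ (1 + C₀) * ‖v‖ := mul_nonneg hM hv.le
  · rw [inv_mul_eq_div, div_le_div_iff₀ hv h6ε]
    rcases le_or_gt 0 D with hD | hD
    · calc D * (6 * ε) ≤ D * (τ * ‖v‖) := mul_le_mul_of_nonneg_left hτv hD
      _ = τ * D * ‖v‖ := by ring
      _ ≤ (1 + C₀) * ‖v‖ := mul_le_mul_of_nonneg_right h₁ hv.le
    · calc D * (6 * ε) ≤ 0 := mul_nonpos_of_nonpos_of_nonneg (by linarith) h6ε.le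
      _ ≤ (1 + C₀) * ‖v‖ := mul_nonneg hM hv.le
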